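/- Let Q be a left quasigroup, α a congruence on Q, Dis(Q) the displacement group, and Dis^α = {h ∈ Dis(Q) : h(a) α a for all a ∈ Q}. Then the quotient left quasigroup Q/α is faithful if and only if α equals the relation c_{Dis^α} = {(a,b) : L_a L_b^{-1} ∈ Dis^α}. -/

import Mathlib

/-- The displacement group of a left quasigroup. -/
def Dis {Q : Type*} (L : Q → Equiv.Perm Q) : Subgroup (Equiv.Perm Q) :=
  Subgroup.closure {x : Equiv.Perm Q | ∃ a b : Q, x = L a * (L b)⁻¹}

/-- Q/α is faithful iff α = c_{Dis^α}. -/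
theorem stmt_4 {Q : Type*} (mul ld : Q → Q → Q)
    (h1 : ∀ x y, mul x (ld x y) = y) (h2 : ∀ x y, ld x (mul x y) = y)
    (L : Q → Equiv.Perm Q) (hL : ∀ a b : Q, L a b = mul a b)
    (r : Q → Q → Prop) (hequiv : Equivalence r)
    (hcong : ∀ a b c d, r a c → r b d → r (mul a b) (mul c d) ∧ r (ld a b) (ld c d)) :
    (∀ a b : Q, (∀ c, r (mul a c) (mul b c)) → r a b) ↔
      (∀ a b : Q, r a b ↔
        (L a * (L b)⁻¹ ∈ Dis L ∧ ∀ c : Q, r ((L a * (L b)⁻¹) c) c)) := by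
  have hinv : ∀ b c : Q, (L b)⁻¹ c = ld b c := fun b c =>
    (L b).injective (by rw [← Equiv.Perm.mul_apply, mul_inv_cancel, Equiv.Perm.one_apply, hL, h1])
  have happ : ∀ a b c : Q, (L a * (L b)⁻¹) c = mul a (ld b c) := by
    intro a b c
    rw [Equiv.Perm.mul_apply, hinv, hL]
  have hmem : ∀ a b : Q, L a * (L b)⁻¹ ∈ Dis L := fun a b =>
    Subgroup.subset_closure ⟨a, b, rfl⟩
  constructor
  · intro hf a b
    constructor
    · intro hab
      refine ⟨hmem a b, fun c => ?_⟩
      rw [happ]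
      have := (hcong a (ld b c) b (ld b c) hab (hequiv.refl _)).1
      rwa [h1] at this
    · rintro ⟨-, h⟩
      apply hf
      intro c
      have := h (mul b c)
      rwa [happ, h2] at this
  · intro hc a b hab
    rw [hc]
    refine ⟨hmem a b, fun c => ?_⟩
    rw [happ]
    have := hab (ld b c)
    rwa [h1] at this
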